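/- If f ∈ K{{x}} is homogeneous of degree n (i.e. supported on monomials S with deg_x(S) = n), then (x d/dx)(f) = n · f, where (x d/dx) = φ_{(x,x)} ∘ d. -/

import Mathlib

namespace Planar

inductive PVar : Type
  | vx : PVar
  | vy : PVar
deriving DecidableEq

/-- A finite planar reduced rooted tree: every internal vertex has at least two
(ordered) children, encoded as `node t₁ t₂ rest` with children list `t₁ :: t₂ :: rest`;
leaves are labeled by a variable (an isomorphism class of such a labeled tree is
faithfully represented by this inductive data). -/
inductive PTree : Type
  | leaf : PVar → PTree
  | node : PTree → PTree → List PTree → PTree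

namespace PTree

/-- The number of leaves carrying the label `v`. -/
def countLeaf (v : PVar) : PTree → ℕ
  | .leaf w => if w = v then 1 else 0
  | .node t1 t2 rest =>
      countLeaf v t1 + countLeaf v t2 + (rest.attach.map fun t => countLeaf v t.1).sum
decreasing_by
  all_goals simp_wf
  · omega
  · omega
  · have := List.sizeOf_lt_of_mem t.2
    omega

end PTree

/-- `P'(x,y)`: planar monomials plus the empty tree `1_P` (= `none`). -/
abbrev PT := Option PTree

/-- `deg_x`: the number of leaves labeled `x`. -/
def degx (S : PT) : ℕ := S.elim 0 (PTree.countLeaf .vx)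

/-- `deg_y`: the number of leaves labeled `y`. -/
def degy (S : PT) : ℕ := S.elim 0 (PTree.countLeaf .vy)

/-- `m`-ary grafting `•_m` on `P'(x,y)` (`m = l.length`): join the non-trivial entries
at a new root; the conventions `•_m(1_P,…,1_P) = 1_P`, dropping of `1_P`-entries and
`•_2(S,1_P) = •_2(1_P,S) = S` amount to discarding the `1_P`-entries first. -/
def graft (l : List PT) : PT :=
  match l.reduceOption with
  | [] => none
  | [t] => some t
  | t1 :: t2 :: ts => some (.node t1 t2 ts)

variable (K : Type) [Field K]

/-- The algebra `K{{x,y}` of planar power series in `x` and polynomials in `y`: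
functions on `P'(x,y)` such that for every `n` only finitely many monomials of
`x`-degree `n` have a nonzero coefficient. -/
def PSer : Type := {f : PT → K // ∀ n : ℕ, {S : PT | f S ≠ 0 ∧ degx S = n}.Finite}

variable {K}

namespace PSer

private lemma finite_add (f g : PSer K) (n : ℕ) :
    {S : PT | f.1 S + g.1 S ≠ 0 ∧ degx S = n}.Finite := by
  apply ((f.2 n).union (g.2 n)).subset
  rintro S ⟨hne, hdeg⟩
  by_cases h1 : f.1 S = 0
  · exact Or.inr ⟨by simpa [h1] using hne, hdeg⟩
  · exact Or.inl ⟨h1, hdeg⟩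

private lemma finite_neg (f : PSer K) (n : ℕ) :
    {S : PT | -f.1 S ≠ 0 ∧ degx S = n}.Finite := by
  apply (f.2 n).subset
  rintro S ⟨hne, hdeg⟩
  exact ⟨by simpa using hne, hdeg⟩

private lemma finite_zero (n : ℕ) :
    {S : PT | (0 : K) ≠ 0 ∧ degx S = n}.Finite := by
  convert Set.finite_empty using 1
  ext S; simp

private lemma finite_smul (a : K) (f : PSer K) (n : ℕ) :
    {S : PT | a * f.1 S ≠ 0 ∧ degx S = n}.Finite := by
  apply (f.2 n).subset
  rintro S ⟨hne, hdeg⟩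
  exact ⟨fun h => hne (by simp [h]), hdeg⟩

noncomputable instance : AddCommGroup (PSer K) where
  add f g := ⟨fun S => f.1 S + g.1 S, finite_add f g⟩
  zero := ⟨fun _ => 0, finite_zero⟩
  neg f := ⟨fun S => -f.1 S, finite_neg f⟩
  add_assoc f g h := Subtype.ext (funext fun S => add_assoc _ _ _)
  add_comm f g := Subtype.ext (funext fun S => add_comm _ _)
  zero_add f := Subtype.ext (funext fun S => zero_add _)
  add_zero f := Subtype.ext (funext fun S => add_zero _)
  neg_add_cancel f := Subtype.ext (funext fun S => neg_add_cancel _)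
  nsmul n f := ⟨fun S => (n : K) * f.1 S, finite_smul _ f⟩
  nsmul_zero f := Subtype.ext (funext fun S => by
    show ((0 : ℕ) : K) * f.1 S = (0 : K); simp)
  nsmul_succ n f := Subtype.ext (funext fun S => by
    show ((n + 1 : ℕ) : K) * f.1 S = (n : K) * f.1 S + f.1 S; push_cast; ring)
  zsmul n f := ⟨fun S => (n : K) * f.1 S, finite_smul _ f⟩
  zsmul_zero' f := Subtype.ext (funext fun S => by
    show ((0 : ℤ) : K) * f.1 S = (0 : K); simp)
  zsmul_succ' n f := Subtype.ext (funext fun S => by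
    show ((Int.ofNat n.succ : ℤ) : K) * f.1 S = ((Int.ofNat n : ℤ) : K) * f.1 S + f.1 S
    simp only [Int.ofNat_eq_coe]; push_cast; ring)
  zsmul_neg' n f := Subtype.ext (funext fun S => by
    show ((Int.negSucc n : ℤ) : K) * f.1 S = -(((n.succ : ℤ) : K) * f.1 S)
    simp [Int.negSucc_eq]; push_cast; ring)

noncomputable instance : Module K (PSer K) where
  smul a f := ⟨fun S => a * f.1 S, finite_smul a f⟩
  one_smul f := Subtype.ext (funext fun S => one_mul _)
  mul_smul a b f := Subtype.ext (funext fun S => mul_assoc _ _ _)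
  smul_zero a := Subtype.ext (funext fun S => mul_zero _)
  smul_add a f g := Subtype.ext (funext fun S => mul_add _ _ _)
  add_smul a b f := Subtype.ext (funext fun S => add_mul _ _ _)
  zero_smul f := Subtype.ext (funext fun S => zero_mul _)

@[simp] lemma add_coeff (f g : PSer K) (S : PT) : (f + g).1 S = f.1 S + g.1 S := rfl
@[simp] lemma smul_coeff (a : K) (f : PSer K) (S : PT) : (a • f).1 S = a * f.1 S := rfl
@[simp] lemma zero_coeff (S : PT) : (0 : PSer K).1 S = 0 := rfl

end PSer

open PSer

/-- The indicator series of a single planar monomial `S ∈ P'(x,y)`. -/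
noncomputable def mono (S : PT) : PSer K := by
  classical
  refine ⟨fun T => if T = S then 1 else 0, fun n => (Set.finite_singleton S).subset ?_⟩
  rintro T ⟨h1, -⟩
  by_contra hc
  exact h1 (if_neg (by simpa [Set.mem_singleton_iff] using hc))

/-- The unit series `1_P` (the empty tree). -/
noncomputable def onePS : PSer K := mono none

/-- The series `x` (the one-vertex tree labeled `x`). -/
noncomputable def Xps : PSer K := mono (some (.leaf .vx))

/-- The series `y = dx` (the one-vertex tree labeled `y`). -/
noncomputable def Yps : PSer K := mono (some (.leaf .vy))

/-- Coefficient of the product `•_m(f₁,…,f_m)` at `S`: the (finite) sum of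
`c_{S₁}(f₁)⋯c_{S_m}(f_m)` over all decompositions `S = •_m(S₁,…,S_m)`. -/
noncomputable def bulletCoeff (fs : List (PSer K)) (S : PT) : K :=
  ∑ᶠ t ∈ {t : List PT | t.length = fs.length ∧ graft t = S},
    (List.zipWith (fun f u => f.1 u) fs t).prod

open Classical in
/-- The `m`-ary product `•_m(f₁,…,f_m)` on `K{{x,y}` (`m = fs.length`). -/
noncomputable def bullet (fs : List (PSer K)) : PSer K :=
  if h : ∀ n : ℕ, {S : PT | bulletCoeff fs S ≠ 0 ∧ degx S = n}.Finite
  then ⟨bulletCoeff fs, h⟩ else 0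

/-- The `x`-order `ord_x(f) ∈ ℕ ∪ {∞}`: the least `x`-degree of a monomial with
nonzero coefficient (`∞` for `f = 0`). -/
noncomputable def ordx (f : PSer K) : ℕ∞ :=
  ⨅ S ∈ {S : PT | f.1 S ≠ 0}, (degx S : ℕ∞)

/-- The `x`-adic absolute value `|f|ₓ = (1/2)^{ord_x f}` (`= 0` for `f = 0`). -/
noncomputable def normx (f : PSer K) : ℝ :=
  if ordx f = ⊤ then 0 else (2⁻¹ : ℝ) ^ (ordx f).toNat

/-- The `x`-adic distance `|f - g|ₓ`. -/
noncomputable def distx (f g : PSer K) : ℝ := normx (f - g)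

/-- A Cauchy sequence for the `x`-adic distance. -/
def IsCauchySeq (u : ℕ → PSer K) : Prop :=
  ∀ ε : ℝ, 0 < ε → ∃ N : ℕ, ∀ p q : ℕ, N ≤ p → N ≤ q → distx (u p) (u q) < ε

/-- Convergence of a sequence to `f` for the `x`-adic distance. -/
def TendstoSeq (u : ℕ → PSer K) (f : PSer K) : Prop :=
  ∀ ε : ℝ, 0 < ε → ∃ N : ℕ, ∀ p : ℕ, N ≤ p → distx (u p) f < ε

/-- Continuity of a map between two spaces equipped with distance functions. -/
def ContWrt {α β : Type*} (dα : α → α → ℝ) (dβ : β → β → ℝ) (φ : α → β) : Prop :=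
  ∀ a : α, ∀ ε : ℝ, 0 < ε → ∃ δ : ℝ, 0 < δ ∧ ∀ b : α, dα b a < δ → dβ (φ b) (φ a) < ε

/-- The property of being supported on monomials all of whose leaves are labeled `x`. -/
def OnlyX (f : PSer K) : Prop := ∀ S : PT, f.1 S ≠ 0 → degy S = 0

variable (K) in
/-- `K{{x}}`, the closed unital subalgebra of `K{{x,y}` generated by `x`, as a
submodule: the series supported on `1_P` and trees all of whose leaves are labeled `x`. -/
noncomputable def kxSub : Submodule K (PSer K) where
  carrier := {f | OnlyX f}
  add_mem' := by
    intro f g hf hg S hS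
    by_cases h1 : f.1 S = 0
    · exact hg S (by simpa [h1] using hS)
    · exact hf S h1
  zero_mem' := by intro S hS; simp at hS
  smul_mem' := by
    intro a f hf S hS
    exact hf S (fun h => hS (by simp [h]))

variable (K) in
/-- The space `K{{x}}` of planar power series in `x`. -/
abbrev Kx : Type _ := ↥(kxSub K)

@[simp] lemma mem_kxSub {f : PSer K} : f ∈ kxSub K ↔ OnlyX f := Iff.rfl

/-- The `x`-adic distance on `K{{x}}`. -/
noncomputable def distKx (f g : Kx K) : ℝ := distx f.1 g.1

lemma onePS_mem_kxSub : onePS ∈ kxSub (K := K) := by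
  intro S hS
  by_cases h : S = none
  · subst h; rfl
  · exact absurd (if_neg h) hS

lemma Xps_mem_kxSub : Xps ∈ kxSub (K := K) := by
  intro S hS
  by_cases h : S = some (.leaf .vx)
  · subst h; simp [degy, PTree.countLeaf]
  · exact absurd (if_neg h) hS

/-- `1_P` as an element of `K{{x}}`. -/
noncomputable def oneX : Kx K := ⟨onePS, onePS_mem_kxSub⟩

/-- `x` as an element of `K{{x}}`. -/
noncomputable def xX : Kx K := ⟨Xps, Xps_mem_kxSub⟩

open Classical in
/-- The `m`-ary product `•_m` on `K{{x}}` (`m = fs.length`). -/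
noncomputable def bulletX (fs : List (Kx K)) : Kx K :=
  if h : bullet (fs.map (fun f => f.1)) ∈ kxSub K
  then ⟨bullet (fs.map (fun f => f.1)), h⟩ else 0

open Classical in
/-- The homogeneous component of degree `n` (w.r.t. `deg_x`) of a planar power series. -/
noncomputable def comp (f : PSer K) (n : ℕ) : PSer K :=
  ⟨fun S => if degx S = n then f.1 S else 0, by
    intro m
    apply (f.2 m).subset
    rintro S ⟨h1, h2⟩
    refine ⟨?_, h2⟩
    by_cases hd : degx S = n
    · simpa [hd] using h1
    · simp [hd] at h1⟩

/-- The homogeneous component of degree `n` of an element of `K{{x}}`. -/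
noncomputable def compX (f : Kx K) (n : ℕ) : Kx K :=
  ⟨comp f.1 n, by
    intro S hS
    apply (mem_kxSub.mp f.2) S
    simp only [comp] at hS
    by_cases hd : degx S = n
    · simpa [hd] using hS
    · simp [hd] at hS⟩

/-- A substitution homomorphism `φ_{(g,h)} : K{{x,y} → K{{x,y}`: `K`-linear, compatible
with all grafting operations `•_m` (`m ≥ 2`), unital, `x ↦ g`, `y ↦ h`, and continuous
for the `x`-adic topology. -/
structure IsSubstHom (g h : PSer K) (φ : PSer K → PSer K) : Prop where
  linear : IsLinearMap K φ
  map_graft : ∀ fs : List (PSer K), 2 ≤ fs.length → φ (bullet fs) = bullet (fs.map φ)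
  map_one : φ onePS = onePS
  map_X : φ Xps = g
  map_Y : φ Yps = h
  cont : ContWrt distx distx φ

/-- A substitution homomorphism `φ_g : K{{x}} → K{{x}}` with `x ↦ g`. -/
structure IsSubstHomX (g : Kx K) (φ : Kx K → Kx K) : Prop where
  linear : IsLinearMap K φ
  map_graft : ∀ fs : List (Kx K), 2 ≤ fs.length → φ (bulletX fs) = bulletX (fs.map φ)
  map_one : φ oneX = oneX
  map_X : φ xX = g
  cont : ContWrt distKx distKx φ

/-- The universal derivation `d : K{{x}} → K{{x,y}`: continuous, `K`-linear, `d x = y`,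
and satisfying the Leibniz rule for every grafting operation `•_m` (`m ≥ 2`). -/
structure IsUDeriv (d : Kx K → PSer K) : Prop where
  linear : IsLinearMap K d
  cont : ContWrt distKx distx d
  map_X : d xX = Yps
  leibniz : ∀ fs : List (Kx K), 2 ≤ fs.length →
    d (bulletX fs) = ∑ i : Fin fs.length,
      bullet ((fs.map (fun f => f.1)).set i.1 (d (fs.get i)))

/-- The `k`-ary planar exponential series `Exp_k(x)`: constant coefficient `1`,
coefficient `1` at `x`, and `Exp_k(kx) = •_k(Exp_k(x),…,Exp_k(x))`. -/
structure IsExp (k : ℕ) (f : Kx K) : Prop where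
  coeff_one : f.1.1 none = 1
  coeff_X : f.1.1 (some (.leaf .vx)) = 1
  funEq : ∀ φ : Kx K → Kx K, IsSubstHomX ((k : K) • xX) φ →
    φ f = bulletX (List.replicate k f)

/-- `ℓ = Log_k(1+x)`, the planar logarithm attached to a planar exponential series `e`:
`ord_x ℓ ≥ 1` and `ℓ(e - 1) = x`. -/
structure IsLogOf (e ℓ : Kx K) : Prop where
  ord : 1 ≤ ordx ℓ.1
  eq : ∀ φ : Kx K → Kx K, IsSubstHomX (e - oneX) φ → φ ℓ = xX

end Planar

namespace Planar
open PSer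
variable {K : Type} [Field K]

open Classical

lemma mono_coeff (S T : PT) : (mono (K := K) S).1 T = if T = S then 1 else 0 := by
  unfold mono
  rfl

lemma mono_coeff_self (S : PT) : (mono (K := K) S).1 S = 1 := by
  rw [mono_coeff, if_pos rfl]

lemma mono_coeff_ne {S T : PT} (h : T ≠ S) : (mono (K := K) S).1 T = 0 := by
  rw [mono_coeff, if_neg h]

lemma reduceOption_map_some (l : List PTree) : (l.map some).reduceOption = l := by
  induction l with
  | nil => rfl
  | cons a l ih => simpa [List.reduceOption_cons_of_some] using ih

lemma graft_map_some (t1 t2 : PTree) (ts : List PTree) :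
    graft ((t1 :: t2 :: ts).map some) = some (.node t1 t2 ts) := by
  unfold graft
  rw [reduceOption_map_some]

lemma countLeaf_node (v : PVar) (t1 t2 : PTree) (ts : List PTree) :
    PTree.countLeaf v (.node t1 t2 ts) =
      PTree.countLeaf v t1 + PTree.countLeaf v t2 + (ts.map (PTree.countLeaf v)).sum := by
  rw [PTree.countLeaf, List.attach_map_val]

lemma onlyX_mono {S : PT} (h : degy S = 0) : OnlyX (mono (K := K) S) := by
  intro T hT
  have hTS : T = S := by
    by_contra hc
    exact hT (mono_coeff_ne hc)
  subst hTS; exact h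

/-- `mono S` as an element of `K{{x}}` (equal to `0` if `S` has a `y`-leaf). -/
noncomputable def monoX (S : PT) : Kx K :=
  ⟨if degy S = 0 then mono S else 0, by
    split
    · exact onlyX_mono ‹_›
    · intro T hT; simp at hT⟩

lemma monoX_coe {S : PT} (h : degy S = 0) : (monoX (K := K) S).1 = mono S := by
  simp only [monoX, if_pos h]

/-- Key evaluation: `bulletCoeff` on a list of scalar multiples of monomials. -/
lemma bulletCoeff_eval (as : List K) (Ss : List PT) (h : as.length = Ss.length) (T : PT) :
    bulletCoeff (List.zipWith (fun a S => a • mono S) as Ss) T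
      = if T = graft Ss then as.prod else 0 := by
  set gs := List.zipWith (fun a S => a • mono (K := K) S) as Ss with hgs
  have hlen : gs.length = Ss.length := by simp [hgs, h]
  set M : Set (List PT) := {t | t.length = gs.length ∧ graft t = T} with hM
  set F : List PT → K := fun t => (List.zipWith (fun f u => f.1 u) gs t).prod with hF
  have key : ∀ t : List PT, t ≠ Ss → M.indicator F t = 0 := by
    intro t ht
    by_cases hMt : t ∈ M
    · rw [Set.indicator_of_mem hMt]
      obtain ⟨hl, -⟩ := hMt
      have hlt : t.length = Ss.length := hl.trans hlen
      have hne : ¬ ∀ (i : ℕ) (h₁ : i < t.length) (h₂ : i < Ss.length), t[i] = Ss[i] :=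
        fun hc => ht (List.ext_getElem hlt hc)
      push_neg at hne
      obtain ⟨i, h₁, h₂, hi⟩ := hne
      apply List.prod_eq_zero
      have hib : i < (List.zipWith (fun (f : PSer K) u => f.1 u) gs t).length := by
        rw [List.length_zipWith]; omega
      have hz : (List.zipWith (fun (f : PSer K) u => f.1 u) gs t)[i] = 0 := by
        rw [List.getElem_zipWith]
        have hgi : gs[i]'(by omega) = as[i]'(by omega) • mono (Ss[i]'h₂) := by
          simp only [hgs, List.getElem_zipWith]
        rw [hgi]
        rw [smul_coeff, mono_coeff_ne hi, mul_zero]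
      have hmem := List.getElem_mem hib
      rwa [hz] at hmem
    · rw [Set.indicator_of_notMem hMt]
  have hmain : bulletCoeff gs T = M.indicator F Ss := by
    have hrfl : bulletCoeff gs T = ∑ᶠ t ∈ M, F t := rfl
    rw [hrfl, finsum_mem_def]
    exact finsum_eq_single _ Ss key
  rw [hmain]
  by_cases hT : T = graft Ss
  · have hSs : Ss ∈ M := ⟨(hlen).symm, hT.symm⟩
    rw [Set.indicator_of_mem hSs, if_pos hT]
    show (List.zipWith (fun (f : PSer K) u => f.1 u) gs Ss).prod = as.prod
    have hzw : List.zipWith (fun (f : PSer K) u => f.1 u) gs Ss = as := by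
      apply List.ext_getElem (by simp [hlen, h])
      intro i h1 h2
      rw [List.getElem_zipWith]
      have hgi : gs[i]'(by simp at h1; omega) = as[i]'h2 • mono (Ss[i]'(by omega)) := by
        simp only [hgs, List.getElem_zipWith]
      rw [hgi, smul_coeff, mono_coeff_self, mul_one]
    rw [hzw]
  · rw [if_neg hT, Set.indicator_of_notMem (fun hSs => hT hSs.2.symm)]

lemma bullet_eval (as : List K) (Ss : List PT) (h : as.length = Ss.length) :
    bullet (List.zipWith (fun a S => a • mono S) as Ss) = as.prod • mono (K := K) (graft Ss) := by
  have hfin : ∀ n : ℕ, {S : PT |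
      bulletCoeff (List.zipWith (fun a S => a • mono (K := K) S) as Ss) S ≠ 0 ∧ degx S = n}.Finite := by
    intro n
    apply (Set.finite_singleton (graft Ss)).subset
    rintro T ⟨h1, -⟩
    rw [bulletCoeff_eval as Ss h] at h1
    by_contra hc
    exact h1 (if_neg (by simpa using hc))
  rw [bullet]; refine (dif_pos hfin).trans ?_
  apply Subtype.ext; funext T
  show bulletCoeff (List.zipWith (fun a S => a • mono S) as Ss) T
      = (as.prod • mono (K := K) (graft Ss)).1 T
  rw [bulletCoeff_eval as Ss h]
  rw [smul_coeff, mono_coeff]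
  split <;> simp

end Planar
namespace Planar
open PSer
variable {K : Type} [Field K]

lemma bullet_monos (Ss : List PT) :
    bullet (Ss.map (fun S => mono (K := K) S)) = mono (graft Ss) := by
  have hz : List.zipWith (fun (a : K) S => a • mono (K := K) S) (List.replicate Ss.length (1 : K)) Ss
      = Ss.map (fun S => mono S) := by
    apply List.ext_getElem (by simp)
    intro i h1 h2
    rw [List.getElem_zipWith, List.getElem_replicate, List.getElem_map, one_smul]
  have := bullet_eval (List.replicate Ss.length (1 : K)) Ss (by simp)
  rw [hz] at this
  simpa using this

lemma bullet_monos_set (Ss : List PT) (i : ℕ) (hi : i < Ss.length) (c : K) (g : PSer K)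
    (hg : g = c • mono (Ss[i]'hi)) :
    bullet ((Ss.map (fun S => mono S)).set i g) = c • mono (K := K) (graft Ss) := by
  subst hg
  have hz : List.zipWith (fun (a : K) S => a • mono (K := K) S) ((List.replicate Ss.length (1 : K)).set i c) Ss
      = (Ss.map (fun S => mono S)).set i (c • mono (Ss[i]'hi)) := by
    apply List.ext_getElem (by simp)
    intro j h1 h2
    rw [List.getElem_zipWith, List.getElem_set, List.getElem_set, List.getElem_replicate,
      List.getElem_map]
    split
    · next hij => subst hij; rfl
    · rw [one_smul]
  have hp : ((List.replicate Ss.length (1 : K)).set i c).prod = c := by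
    rw [List.prod_set]
    simp [hi, List.take_replicate, List.drop_replicate]
  have := bullet_eval ((List.replicate Ss.length (1 : K)).set i c) Ss (by simp)
  rw [hz, hp] at this
  exact this

lemma graft_pair_right (t1 : PT) : graft [t1, none] = t1 := by cases t1 <;> rfl
lemma graft_pair_left (t1 : PT) : graft [none, t1] = t1 := by cases t1 <;> rfl

/-- `•₂(g, 1) = g`. -/
lemma bullet_pair_one_right (g : PSer K) : bullet [g, onePS] = g := by
  have hcoeff : ∀ T, bulletCoeff [g, (onePS : PSer K)] T = g.1 T := by
    intro T
    set M : Set (List PT) := {t | t.length = ([g, (onePS : PSer K)]).length ∧ graft t = T} with hM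
    set F : List PT → K := fun t =>
      (List.zipWith (fun (f : PSer K) u => f.1 u) [g, onePS] t).prod with hF
    have key : ∀ t : List PT, t ≠ [T, none] → M.indicator F t = 0 := by
      intro t ht
      by_cases hMt : t ∈ M
      · rw [Set.indicator_of_mem hMt]
        obtain ⟨hl, hgr⟩ := hMt
        obtain ⟨a, b, rfl⟩ := List.length_eq_two.mp hl
        show g.1 a * ((onePS : PSer K).1 b * 1) = 0
        by_cases hb : b = none
        · subst hb
          rw [graft_pair_right] at hgr
          exact absurd (by rw [hgr]) ht
        · rw [show (onePS : PSer K).1 b = 0 from mono_coeff_ne hb, zero_mul, mul_zero]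
      · rw [Set.indicator_of_notMem hMt]
    have hmain : bulletCoeff [g, (onePS : PSer K)] T = M.indicator F [T, none] := by
      have hrfl : bulletCoeff [g, (onePS : PSer K)] T = ∑ᶠ t ∈ M, F t := rfl
      rw [hrfl, finsum_mem_def]
      exact finsum_eq_single _ _ key
    rw [hmain, Set.indicator_of_mem (show [T, none] ∈ M from ⟨rfl, graft_pair_right T⟩)]
    show g.1 T * ((onePS : PSer K).1 none * 1) = g.1 T
    rw [show (onePS : PSer K).1 none = 1 from mono_coeff_self none, one_mul, mul_one]
  have hfin : ∀ n : ℕ, {S : PT | bulletCoeff [g, (onePS : PSer K)] S ≠ 0 ∧ degx S = n}.Finite := by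
    intro n
    apply (g.2 n).subset
    rintro T ⟨h1, h2⟩
    exact ⟨by rwa [hcoeff] at h1, h2⟩
  rw [bullet]; refine (dif_pos hfin).trans ?_
  exact Subtype.ext (funext hcoeff)

/-- `•₂(1, g) = g`. -/
lemma bullet_pair_one_left (g : PSer K) : bullet [onePS, g] = g := by
  have hcoeff : ∀ T, bulletCoeff [(onePS : PSer K), g] T = g.1 T := by
    intro T
    set M : Set (List PT) := {t | t.length = ([(onePS : PSer K), g]).length ∧ graft t = T} with hM
    set F : List PT → K := fun t =>
      (List.zipWith (fun (f : PSer K) u => f.1 u) [onePS, g] t).prod with hF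
    have key : ∀ t : List PT, t ≠ [none, T] → M.indicator F t = 0 := by
      intro t ht
      by_cases hMt : t ∈ M
      · rw [Set.indicator_of_mem hMt]
        obtain ⟨hl, hgr⟩ := hMt
        obtain ⟨a, b, rfl⟩ := List.length_eq_two.mp hl
        show (onePS : PSer K).1 a * (g.1 b * 1) = 0
        by_cases ha : a = none
        · subst ha
          rw [graft_pair_left] at hgr
          exact absurd (by rw [hgr]) ht
        · rw [show (onePS : PSer K).1 a = 0 from mono_coeff_ne ha, zero_mul]
      · rw [Set.indicator_of_notMem hMt]
    have hmain : bulletCoeff [(onePS : PSer K), g] T = M.indicator F [none, T] := by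
      have hrfl : bulletCoeff [(onePS : PSer K), g] T = ∑ᶠ t ∈ M, F t := rfl
      rw [hrfl, finsum_mem_def]
      exact finsum_eq_single _ _ key
    rw [hmain, Set.indicator_of_mem (show [none, T] ∈ M from ⟨rfl, graft_pair_left T⟩)]
    show (onePS : PSer K).1 none * (g.1 T * 1) = g.1 T
    rw [show (onePS : PSer K).1 none = 1 from mono_coeff_self none, one_mul, mul_one]
  have hfin : ∀ n : ℕ, {S : PT | bulletCoeff [(onePS : PSer K), g] S ≠ 0 ∧ degx S = n}.Finite := by
    intro n
    apply (g.2 n).subset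
    rintro T ⟨h1, h2⟩
    exact ⟨by rwa [hcoeff] at h1, h2⟩
  rw [bullet]; refine (dif_pos hfin).trans ?_
  exact Subtype.ext (funext hcoeff)

lemma d_one_eq_zero (d : Kx K → PSer K) (hd : IsUDeriv d) : d oneX = 0 := by
  have hb : bullet [(onePS : PSer K), onePS] = onePS := by
    have := bullet_monos (K := K) [none, none]
    simpa [onePS, graft_pair_right] using this
  have hmap : (([oneX, oneX] : List (Kx K)).map (fun f => f.1)) = [onePS, onePS] := rfl
  have hbX : bulletX [(oneX : Kx K), oneX] = oneX := by
    rw [bulletX, hmap, hb, dif_pos onePS_mem_kxSub]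
    rfl
  have h2 : d (bulletX [oneX, oneX]) = ∑ i : Fin 2,
      bullet ((([oneX, oneX] : List (Kx K)).map (fun f => f.1)).set i.1
        (d (([oneX, oneX] : List (Kx K)).get i))) :=
    hd.leibniz [oneX, oneX] (by simp)
  rw [hbX, Fin.sum_univ_two] at h2
  have e0 : bullet ((([oneX, oneX] : List (Kx K)).map (fun f => f.1)).set (0 : Fin 2).1
      (d (([oneX, oneX] : List (Kx K)).get (0 : Fin 2)))) = d oneX := by
    show bullet [d oneX, onePS] = d oneX
    exact bullet_pair_one_right _
  have e1 : bullet ((([oneX, oneX] : List (Kx K)).map (fun f => f.1)).set (1 : Fin 2).1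
      (d (([oneX, oneX] : List (Kx K)).get (1 : Fin 2)))) = d oneX := by
    show bullet [onePS, d oneX] = d oneX
    exact bullet_pair_one_left _
  rw [e0, e1] at h2
  have h3 : d oneX + 0 = d oneX + d oneX := by rw [add_zero]; exact h2
  exact (add_left_cancel h3).symm

end Planar
namespace Planar
open PSer
variable {K : Type} [Field K]

lemma degy_child {t1 t2 : PTree} {ts : List PTree}
    (hy : PTree.countLeaf .vy (.node t1 t2 ts) = 0) :
    ∀ c ∈ t1 :: t2 :: ts, PTree.countLeaf .vy c = 0 := by
  rw [countLeaf_node] at hy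
  intro c hc
  rcases List.mem_cons.mp hc with rfl | hc
  · omega
  rcases List.mem_cons.mp hc with rfl | hc
  · omega
  · have hsum : (ts.map (PTree.countLeaf .vy)).sum = 0 := by omega
    exact List.sum_eq_zero_iff.mp hsum _ (List.mem_map_of_mem hc)

lemma sizeOf_child {t1 t2 : PTree} {ts : List PTree} {N : ℕ}
    (ht : sizeOf (PTree.node t1 t2 ts) ≤ N + 1) :
    ∀ c ∈ t1 :: t2 :: ts, sizeOf c ≤ N := by
  simp only [PTree.node.sizeOf_spec] at ht
  intro c hc
  rcases List.mem_cons.mp hc with rfl | hc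
  · omega
  rcases List.mem_cons.mp hc with rfl | hc
  · omega
  · have := List.sizeOf_lt_of_mem hc
    omega

lemma sum_fin_getElem {M : Type*} [AddCommMonoid M] (l : List PT) (g : PT → M) (n : ℕ)
    (h : n = l.length) :
    ∑ i : Fin n, g (l[i.1]'(h ▸ i.2)) = (l.map g).sum := by
  subst h
  conv_rhs => rw [← List.ofFn_getElem (xs := l)]
  rw [List.map_ofFn, List.sum_ofFn]
  rfl

lemma sum_map_smul (l : List PT) (v : PSer K) :
    (l.map (fun S => (degx S : K) • v)).sum = (((l.map degx).sum : ℕ) : K) • v := by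
  induction l with
  | nil => simp
  | cons a l ih => simp [ih, add_smul]

lemma phi_fixes_mono (φ : PSer K → PSer K) (hφ : IsSubstHom Xps Xps φ) :
    ∀ t : PTree, PTree.countLeaf .vy t = 0 → φ (mono (some t)) = mono (some t) := by
  suffices H : ∀ (N : ℕ) (t : PTree), sizeOf t ≤ N → PTree.countLeaf .vy t = 0 →
      φ (mono (some t)) = mono (some t) from fun t => H (sizeOf t) t le_rfl
  intro N
  induction N with
  | zero =>
    intro t ht _
    exfalso
    cases t <;> simp at ht <;> omega
  | succ N ih =>
    intro t ht hy
    match t with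
    | .leaf .vx => exact hφ.map_X
    | .leaf .vy => simp [PTree.countLeaf] at hy
    | .node t1 t2 ts =>
      have hy' := degy_child hy
      have hsz := sizeOf_child ht
      have hmono : mono (K := K) (some (PTree.node t1 t2 ts))
          = bullet (((t1 :: t2 :: ts).map some).map (fun S => mono S)) := by
        rw [bullet_monos, graft_map_some]
      rw [hmono, hφ.map_graft _ (by simp)]
      have hmapφ : ((((t1 :: t2 :: ts).map some).map (fun S => mono (K := K) S)).map φ)
          = ((t1 :: t2 :: ts).map some).map (fun S => mono S) := by
        rw [List.map_map]
        apply List.map_congr_left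
        intro S hS
        obtain ⟨c, hc, rfl⟩ := List.mem_map.mp hS
        show φ (mono (some c)) = mono (some c)
        exact ih c (hsz c hc) (hy' c hc)
      rw [hmapφ, ← hmono]

end Planar
namespace Planar
open PSer
variable {K : Type} [Field K]

lemma key_euler (φ : PSer K → PSer K) (hφ : IsSubstHom Xps Xps φ)
    (d : Kx K → PSer K) (hd : IsUDeriv d) :
    ∀ S : PT, degy S = 0 → φ (d (monoX S)) = (degx S : K) • mono S := by
  suffices H : ∀ (N : ℕ) (t : PTree), sizeOf t ≤ N → PTree.countLeaf .vy t = 0 →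
      φ (d (monoX (some t))) = (PTree.countLeaf .vx t : K) • mono (some t) by
    rintro (_ | t) hS
    · have h1 : monoX (K := K) none = oneX := Subtype.ext (monoX_coe rfl)
      rw [h1, d_one_eq_zero d hd, hφ.linear.map_zero]
      show (0 : PSer K) = ((0 : ℕ) : K) • mono none
      simp
    · exact H (sizeOf t) t le_rfl hS
  intro N
  induction N with
  | zero =>
    intro t ht _
    exfalso
    cases t <;> simp at ht <;> omega
  | succ N ih =>
    intro t ht hy
    match t with
    | .leaf .vx =>
      have h1 : monoX (K := K) (some (.leaf .vx)) = xX :=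
        Subtype.ext (monoX_coe (by simp [degy, PTree.countLeaf]))
      rw [h1, hd.map_X, hφ.map_Y]
      have hc1 : PTree.countLeaf .vx (.leaf .vx) = 1 := by simp [PTree.countLeaf]
      rw [hc1]
      show mono (some (PTree.leaf .vx)) = ((1 : ℕ) : K) • mono (K := K) (some (.leaf .vx))
      simp
    | .leaf .vy => simp [PTree.countLeaf] at hy
    | .node t1 t2 ts =>
      have hy' := degy_child hy
      have hsz := sizeOf_child ht
      have hy2 : ∀ S ∈ (t1 :: t2 :: ts).map some, degy S = 0 := by
        intro S hS
        obtain ⟨c, hc, rfl⟩ := List.mem_map.mp hS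
        exact hy' c hc
      set Ss : List PT := (t1 :: t2 :: ts).map some with hSs
      set fs : List (Kx K) := Ss.map (fun S => monoX S) with hfs
      have hfslen : fs.length = Ss.length := by rw [hfs, List.length_map]
      have hfsval : fs.map (fun f => f.1) = Ss.map (fun S => mono S) := by
        rw [hfs, List.map_map]
        exact List.map_congr_left (fun S hS => monoX_coe (hy2 S hS))
      have hgr : graft Ss = some (PTree.node t1 t2 ts) := graft_map_some t1 t2 ts
      have hbX : bulletX fs = monoX (some (PTree.node t1 t2 ts)) := by
        have hmem : mono (K := K) (some (PTree.node t1 t2 ts)) ∈ kxSub K :=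
          onlyX_mono (S := some (PTree.node t1 t2 ts)) hy
        rw [bulletX, hfsval, bullet_monos, hgr, dif_pos hmem]
        exact Subtype.ext (monoX_coe (S := some (PTree.node t1 t2 ts)) hy).symm
      have hlei : d (monoX (some (PTree.node t1 t2 ts))) = ∑ i : Fin fs.length,
          bullet ((fs.map (fun f => f.1)).set i.1 (d (fs.get i))) := by
        rw [← hbX]
        exact hd.leibniz fs (by simp [hfs, hSs])
      have hφlei0 : φ (d (monoX (some (PTree.node t1 t2 ts)))) = ∑ i : Fin fs.length,
          φ (bullet ((fs.map (fun f => f.1)).set i.1 (d (fs.get i)))) := by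
        rw [hlei]
        exact map_sum (IsLinearMap.mk' φ hφ.linear) _ Finset.univ
      have hterm : ∀ i : Fin fs.length, i ∈ Finset.univ →
          φ (bullet ((fs.map (fun f => f.1)).set i.1 (d (fs.get i))))
          = (degx (Ss[i.1]'(hfslen ▸ i.2)) : K) • mono (K := K)
              (some (PTree.node t1 t2 ts)) := by
        intro i _
        have hi : i.1 < Ss.length := hfslen ▸ i.2
        rw [hφ.map_graft _ (by simp [hfs, hSs])]
        rw [List.map_set, hfsval, List.map_map]
        have hget : fs.get i = monoX (Ss[i.1]'hi) := by
          simp only [List.get_eq_getElem, hfs, List.getElem_map]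
        have hdi : φ (d (fs.get i)) = (degx (Ss[i.1]'hi) : K) • mono (Ss[i.1]'hi) := by
          rw [hget]
          obtain ⟨c, hc, hceq⟩ := List.mem_map.mp (List.getElem_mem (l := Ss) (n := i.1) hi)
          rw [← hceq]
          exact ih c (hsz c hc) (hy' c hc)
        have hmapφ : Ss.map (φ ∘ fun S => mono (K := K) S) = Ss.map (fun S => mono S) :=
          List.map_congr_left (fun S hS => by
            obtain ⟨c, hc, rfl⟩ := List.mem_map.mp hS
            exact phi_fixes_mono φ hφ c (hy' c hc))
        rw [hmapφ, hdi, ← hgr]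
        exact bullet_monos_set Ss i.1 hi _ _ rfl
      have hfin2 : (∑ i : Fin fs.length,
            (degx (Ss[i.1]'(hfslen ▸ i.2)) : K) • mono (K := K)
              (some (PTree.node t1 t2 ts)))
          = (Ss.map (fun S => (degx S : K) • mono (K := K)
              (some (PTree.node t1 t2 ts)))).sum :=
        sum_fin_getElem Ss
          (fun S => (degx S : K) • mono (K := K) (some (PTree.node t1 t2 ts))) fs.length hfslen
      have hdeg : (Ss.map degx).sum = PTree.countLeaf .vx (.node t1 t2 ts) := by
        rw [hSs, List.map_map, countLeaf_node]
        show ((t1 :: t2 :: ts).map (PTree.countLeaf .vx)).sum = _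
        simp
        omega
      calc φ (d (monoX (some (PTree.node t1 t2 ts))))
          = _ := hφlei0
        _ = _ := Finset.sum_congr rfl hterm
        _ = _ := hfin2
        _ = (PTree.countLeaf .vx (.node t1 t2 ts) : K) • mono (some (PTree.node t1 t2 ts)) := by
            rw [sum_map_smul, hdeg]

end Planar
namespace Planar
open PSer
variable {K : Type} [Field K]

/-- Evaluation of the coefficient at `U` as an additive homomorphism. -/
noncomputable def coeffHom (U : PT) : PSer K →+ K where
  toFun g := g.1 U
  map_zero' := rfl
  map_add' _ _ := rfl

end Planar

open Planar in
theorem planar_euler_operator' (K : Type) [Field K]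
    (n : ℕ) (f : Kx K)
    (hf : ∀ S : PT, f.1.1 S ≠ 0 → degx S = n)
    (φ : PSer K → PSer K) (hφ : IsSubstHom Xps Xps φ)
    (d : Kx K → PSer K) (hd : IsUDeriv d) :
    φ (d f) = (n : K) • f.1 := by
  classical
  have hfin : {S : PT | f.1.1 S ≠ 0}.Finite :=
    (f.1.2 n).subset (fun S hS => ⟨hS, hf S hS⟩)
  set T : Finset PT := hfin.toFinset with hT
  have hdegy : ∀ S ∈ T, degy S = 0 := fun S hS =>
    f.2 S (by simpa [hT, Set.Finite.mem_toFinset] using hS)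
  have hcoe : ((∑ S ∈ T, f.1.1 S • monoX (K := K) S : Kx K) : PSer K)
      = ∑ S ∈ T, f.1.1 S • mono S :=
    calc ((∑ S ∈ T, f.1.1 S • monoX (K := K) S : Kx K) : PSer K)
        = (kxSub K).subtype (∑ S ∈ T, f.1.1 S • monoX S) := rfl
      _ = ∑ S ∈ T, (kxSub K).subtype (f.1.1 S • monoX S) := map_sum _ _ _
      _ = ∑ S ∈ T, f.1.1 S • mono S := Finset.sum_congr rfl (fun S hS => by
            show ((f.1.1 S • monoX (K := K) S : Kx K) : PSer K) = _
            rw [show ((f.1.1 S • monoX (K := K) S : Kx K) : PSer K)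
                = f.1.1 S • ((monoX (K := K) S : Kx K) : PSer K) from rfl,
              monoX_coe (hdegy S hS)])
  have hdec : f = ∑ S ∈ T, f.1.1 S • monoX S := by
    apply Subtype.ext
    rw [hcoe]
    apply Subtype.ext
    funext U
    have h1 : ((∑ S ∈ T, f.1.1 S • mono (K := K) S : PSer K)).1 U
        = ∑ S ∈ T, f.1.1 S * (mono (K := K) S).1 U := map_sum (coeffHom U) _ T
    have h2 : ∀ S ∈ T, f.1.1 S * (mono (K := K) S).1 U = if U = S then f.1.1 S else 0 := by
      intro S _
      rw [mono_coeff]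
      split <;> simp
    show f.1.1 U = _
    rw [h1, Finset.sum_congr rfl h2, Finset.sum_ite_eq]
    by_cases hU : U ∈ T
    · rw [if_pos hU]
    · rw [if_neg hU]
      by_contra hne
      exact hU (by simp [hT, Set.Finite.mem_toFinset]; exact fun h => hne (by rw [h]))
  have hDlin : φ (d (∑ S ∈ T, f.1.1 S • monoX S)) = ∑ S ∈ T, f.1.1 S • φ (d (monoX S)) := by
    let D : Kx K →ₗ[K] PSer K :=
      (IsLinearMap.mk' φ hφ.linear).comp (IsLinearMap.mk' d hd.linear)
    calc φ (d (∑ S ∈ T, f.1.1 S • monoX S)) = D (∑ S ∈ T, f.1.1 S • monoX S) := rfl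
      _ = ∑ S ∈ T, D (f.1.1 S • monoX S) := map_sum _ _ _
      _ = ∑ S ∈ T, f.1.1 S • φ (d (monoX S)) :=
          Finset.sum_congr rfl (fun S _ => by rw [map_smul]; rfl)
  have hterm : ∀ S ∈ T, f.1.1 S • φ (d (monoX S)) = f.1.1 S • ((n : K) • mono S) := by
    intro S hS
    rw [key_euler φ hφ d hd S (hdegy S hS),
      hf S (by simpa [hT, Set.Finite.mem_toFinset] using hS)]
  conv_lhs => rw [hdec]
  rw [hDlin, Finset.sum_congr rfl hterm]
  conv_rhs => rw [hdec]
  rw [hcoe, Finset.smul_sum]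
  exact Finset.sum_congr rfl (fun S _ => smul_comm _ _ _)



open Planar in
/-- If `f ∈ K{{x}}` is homogeneous of degree `n`, then
`(x d/dx)(f) = n · f`, where `(x d/dx) = φ_{(x,x)} ∘ d`. -/
theorem planar_euler_operator (K : Type) [Field K]
    (n : ℕ) (f : Kx K)
    (hf : ∀ S : PT, f.1.1 S ≠ 0 → degx S = n)
    (φ : PSer K → PSer K) (hφ : IsSubstHom Xps Xps φ)
    (d : Kx K → PSer K) (hd : IsUDeriv d) :
    φ (d f) = (n : K) • f.1 :=
  planar_euler_operator' K n f hf φ hφ d hd
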